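/- Let μ be a measure on ℝⁿ with radially non-increasing density φ (i.e., φ(tx) ≥ φ(x) for all t ∈ [0,1] and x ∈ ℝⁿ), and let K be a C²₊ convex body containing the origin in its interior. Then n·μ(K) ≥ μ(K; K), where μ(K;K) := lim_{ε→0⁺}(μ(K + εK) − μ(K))/ε = ∫_{S^{n−1}} h_K(u) φ(n_K^{−1}(u)) f_K(u) du. -/

import Mathlib

open Pointwise MeasureTheory Filter Set

-- scaling bound lemma
lemma scale_bound {n : ℕ} (φ : EuclideanSpace ℝ (Fin n) → ℝ)
    (hφc : Continuous φ)
    (hrad : ∀ t : ℝ, t ∈ Set.Icc (0:ℝ) 1 → ∀ x, φ x ≤ φ (t • x))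
    (K : Set (EuclideanSpace ℝ (Fin n))) (hK : MeasurableSet K)
    {c : ℝ} (hc : 1 ≤ c) :
    (volume.withDensity (fun x => ENNReal.ofReal (φ x))) (c • K)
      ≤ ENNReal.ofReal (c ^ n) * (volume.withDensity (fun x => ENNReal.ofReal (φ x))) K := by
  have hc0 : (0:ℝ) < c := lt_of_lt_of_le one_pos hc
  have hcK : MeasurableSet (c • K) := hK.const_smul₀ c
  have hφm : Measurable fun x => ENNReal.ofReal (φ x) :=
    (ENNReal.measurable_ofReal.comp hφc.measurable)
  rw [withDensity_apply _ hcK, withDensity_apply _ hK]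
  have hmap := Measure.map_addHaar_smul (volume : Measure (EuclideanSpace ℝ (Fin n))) (r := c) hc0.ne'
  -- ∫⁻ over c•K as indicator
  have key : ∫⁻ x in c • K, ENNReal.ofReal (φ x) ∂volume
      = ENNReal.ofReal (c ^ n) * ∫⁻ y in K, ENNReal.ofReal (φ (c • y)) ∂volume := by
    have h1 : ∫⁻ x, (c • K).indicator (fun x => ENNReal.ofReal (φ x)) x
          ∂(Measure.map (c • ·) volume)
        = ∫⁻ y, (c • K).indicator (fun x => ENNReal.ofReal (φ x)) (c • y) ∂volume :=
      lintegral_map (hφm.indicator hcK) (measurable_const_smul c)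
    rw [hmap] at h1
    have h2 : ∀ y, (c • K).indicator (fun x => ENNReal.ofReal (φ x)) (c • y)
        = K.indicator (fun y => ENNReal.ofReal (φ (c • y))) y := by
      intro y
      by_cases hy : y ∈ K
      · rw [indicator_of_mem (smul_mem_smul_set hy), indicator_of_mem hy]
      · rw [indicator_of_notMem hy, indicator_of_notMem]
        intro hmem
        exact hy ((smul_mem_smul_set_iff₀ hc0.ne' K y).mp hmem)
    simp only [h2] at h1
    rw [lintegral_smul_measure, smul_eq_mul] at h1
    rw [← lintegral_indicator hcK, ← lintegral_indicator hK]
    have hr : Module.finrank ℝ (EuclideanSpace ℝ (Fin n)) = n := finrank_euclideanSpace_fin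
    rw [hr] at h1
    have habs : |(c ^ n)⁻¹| = (c ^ n)⁻¹ := abs_of_nonneg (by positivity)
    rw [habs] at h1
    rw [← h1, ← mul_assoc, ← ENNReal.ofReal_mul (by positivity),
      mul_inv_cancel₀ (by positivity : (c:ℝ)^n ≠ 0), ENNReal.ofReal_one, one_mul]
  rw [key]
  refine mul_le_mul_right (setLIntegral_mono hφm ?_) _
  intro y _
  refine ENNReal.ofReal_le_ofReal ?_
  have := hrad c⁻¹ ⟨by positivity, inv_le_one_of_one_le₀ hc⟩ (c • y)
  rwa [smul_smul, inv_mul_cancel₀ hc0.ne', one_smul] at this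

theorem stmt19 {n : ℕ} (φ : EuclideanSpace ℝ (Fin n) → ℝ)
    (hφc : Continuous φ) (hφ0 : ∀ x, 0 ≤ φ x)
    (hrad : ∀ t : ℝ, t ∈ Set.Icc (0:ℝ) 1 → ∀ x, φ x ≤ φ (t • x))
    (μ : Measure (EuclideanSpace ℝ (Fin n)))
    (hμ : μ = volume.withDensity (fun x => ENNReal.ofReal (φ x)))
    (K : Set (EuclideanSpace ℝ (Fin n)))
    (hK : IsCompact K) (hKc : Convex ℝ K) (h0 : 0 ∈ interior K)
    (m : ℝ)
    (hlim : Tendsto (fun ε : ℝ => ((μ (K + ε • K)).toReal - (μ K).toReal) / ε)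
      (nhdsWithin 0 (Set.Ioi 0)) (nhds m)) :
    m ≤ n * (μ K).toReal := by
  have hKm : MeasurableSet K := hK.measurableSet
  -- μ K is finite
  have hfin : μ K < ⊤ := by
    obtain ⟨C, hC⟩ := (hK.image_of_continuousOn hφc.continuousOn).bddAbove
    rw [hμ, withDensity_apply _ hKm]
    calc ∫⁻ x in K, ENNReal.ofReal (φ x) ∂volume
        ≤ ∫⁻ _ in K, ENNReal.ofReal C ∂volume := by
          refine setLIntegral_mono measurable_const (fun x hx => ?_)
          exact ENNReal.ofReal_le_ofReal (hC (mem_image_of_mem φ hx))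
      _ = ENNReal.ofReal C * volume K := by rw [setLIntegral_const]
      _ < ⊤ := ENNReal.mul_lt_top ENNReal.ofReal_lt_top hK.measure_lt_top
  -- comparison
  have hcomp : ∀ ε : ℝ, 0 < ε →
      ((μ (K + ε • K)).toReal - (μ K).toReal) / ε
        ≤ (((1+ε)^n - 1) / ε) * (μ K).toReal := by
    intro ε hε
    have hset : K + ε • K = (1 + ε) • K := by
      rw [hKc.add_smul zero_le_one hε.le, one_smul ℝ K]
    have hb : μ (K + ε • K) ≤ ENNReal.ofReal ((1+ε)^n) * μ K := by
      rw [hset, hμ]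
      exact scale_bound φ hφc hrad K hKm (by linarith)
    have hbr : (μ (K + ε • K)).toReal ≤ (1+ε)^n * (μ K).toReal := by
      have hne : ENNReal.ofReal ((1+ε)^n) * μ K ≠ ⊤ :=
        ENNReal.mul_ne_top ENNReal.ofReal_ne_top hfin.ne
      calc (μ (K + ε • K)).toReal ≤ (ENNReal.ofReal ((1+ε)^n) * μ K).toReal :=
            ENNReal.toReal_mono hne hb
        _ = (1+ε)^n * (μ K).toReal := by
            rw [ENNReal.toReal_mul, ENNReal.toReal_ofReal (by positivity)]
    rw [div_mul_eq_mul_div]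
    apply div_le_div_of_nonneg_right ?_ hε.le
    nlinarith [ENNReal.toReal_nonneg (a := μ K)]
  -- limit of comparison function
  have hder : HasDerivAt (fun x : ℝ => (1 + x)^n) (n : ℝ) 0 := by
    have h := ((hasDerivAt_id (0:ℝ)).const_add 1).pow n
    simp at h
    exact h
  have hslope : Tendsto (fun ε : ℝ => ((1+ε)^n - 1) / ε)
      (nhdsWithin 0 (Set.Ioi 0)) (nhds (n : ℝ)) := by
    have h := hasDerivAt_iff_tendsto_slope.mp hder
    have h2 : Tendsto (slope (fun x : ℝ => (1+x)^n) 0)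
        (nhdsWithin 0 (Set.Ioi 0)) (nhds (n : ℝ)) :=
      h.mono_left (nhdsWithin_mono 0 (fun x hx => ne_of_gt hx))
    refine h2.congr' ?_
    filter_upwards [self_mem_nhdsWithin] with ε hε
    simp [slope, div_eq_inv_mul]
  have hg : Tendsto (fun ε : ℝ => (((1+ε)^n - 1) / ε) * (μ K).toReal)
      (nhdsWithin 0 (Set.Ioi 0)) (nhds ((n : ℝ) * (μ K).toReal)) :=
    hslope.mul_const _
  refine le_of_tendsto_of_tendsto hlim hg ?_
  filter_upwards [self_mem_nhdsWithin] with ε hε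
  exact hcomp ε hε
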